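/- Let Y = Σ_{k=1}^r α_k ○_{ℓ=1}^d y_k^{(ℓ)} be a rank-r tensor in standard form (all component vectors of unit norm) with basis coherence μ'_Y < 1/(r-1). Then ‖α‖₂² ≤ (1/(1 - (r-1)μ'_Y)) ‖Y‖², i.e., ‖Y‖² ≥ (1 - (r-1)μ'_Y)‖α‖₂². -/

import Mathlib

open scoped BigOperators

/-- Squared Euclidean (Frobenius) norm of a tensor. -/
noncomputable def tnsq {ι : Type*} [Fintype ι] (X : ι → ℂ) : ℝ := ∑ i, ‖X i‖ ^ 2

/-- The rank-`r` CP tensor `Y = Σ_k α_k ○_ℓ y_k^{(ℓ)}` in standard form. -/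
noncomputable def cpTensor {d r : ℕ} {n : Fin d → ℕ} (α : Fin r → ℂ)
    (y : Fin r → (ℓ : Fin d) → Fin (n ℓ) → ℂ) : ((i : Fin d) → Fin (n i)) → ℂ :=
  fun idx => ∑ k, α k * ∏ ℓ, y k ℓ (idx ℓ)

/-- If `Y = Σ_k α_k ○_ℓ y_k^{(ℓ)}` is in standard form (all component vectors of unit
norm) and its basis coherence `μ' = max_{k≠h} Π_ℓ |⟨y_k^{(ℓ)}, y_h^{(ℓ)}⟩|` satisfies
`(r-1)μ' < 1`, then `‖α‖₂² ≤ (1/(1 - (r-1)μ')) ‖Y‖²`. -/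
theorem coeff_norm_le_of_incoherent {d r : ℕ} {n : Fin d → ℕ} (α : Fin r → ℂ) (μ' : ℝ)
    (y : Fin r → (ℓ : Fin d) → Fin (n ℓ) → ℂ)
    (hnorm : ∀ k ℓ, ∑ i, ‖y k ℓ i‖ ^ 2 = (1 : ℝ))
    (hμ : ∀ k h : Fin r, k ≠ h →
      (∏ ℓ, ‖∑ i, y k ℓ i * (starRingEnd ℂ) (y h ℓ i)‖) ≤ μ')
    (hμ0 : 0 ≤ μ') (hμlt : ((r : ℝ) - 1) * μ' < 1) :
    ∑ k, ‖α k‖ ^ 2 ≤ (1 / (1 - ((r : ℝ) - 1) * μ')) * tnsq (cpTensor α y) := by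
  have hcpos : 0 < 1 - ((r : ℝ) - 1) * μ' := by linarith
  set G : Fin r → Fin r → ℂ := fun k h => ∏ ℓ, ∑ i, y k ℓ i * (starRingEnd ℂ) (y h ℓ i)
    with hGdef
  -- expansion of the squared norm
  have key : tnsq (cpTensor α y) =
      ∑ k, ∑ h, (α k * (starRingEnd ℂ) (α h) * G k h).re := by
    have h1 : ∀ idx, ‖cpTensor α y idx‖ ^ 2 =
        (∑ k, ∑ h, α k * (starRingEnd ℂ) (α h) *
          ∏ ℓ, y k ℓ (idx ℓ) * (starRingEnd ℂ) (y h ℓ (idx ℓ))).re := by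
      intro idx
      have : (‖cpTensor α y idx‖ ^ 2 : ℝ) =
          (cpTensor α y idx * (starRingEnd ℂ) (cpTensor α y idx)).re := by
        rw [Complex.mul_conj, Complex.ofReal_re, Complex.normSq_eq_norm_sq]
      rw [this]
      congr 1
      simp only [cpTensor, map_sum, Finset.sum_mul_sum, map_mul, map_prod]
      refine Finset.sum_congr rfl fun k _ => Finset.sum_congr rfl fun h _ => ?_
      rw [mul_mul_mul_comm, Finset.prod_mul_distrib]
    rw [tnsq]
    simp only [h1, ← Complex.re_sum]
    congr 1
    rw [Finset.sum_comm]
    refine Finset.sum_congr rfl fun k _ => ?_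
    rw [Finset.sum_comm]
    refine Finset.sum_congr rfl fun h _ => ?_
    rw [← Finset.mul_sum]
    congr 1
    simp only [hGdef]
    rw [Finset.prod_univ_sum (fun _ => Finset.univ)
        (fun ℓ i => y k ℓ i * (starRingEnd ℂ) (y h ℓ i)), Fintype.piFinset_univ]
  -- diagonal entries of the Gram tensor are 1
  have hdiag : ∀ k, G k k = 1 := by
    intro k
    rw [hGdef]
    have : ∀ ℓ : Fin d, (∑ i, y k ℓ i * (starRingEnd ℂ) (y k ℓ i)) = 1 := by
      intro ℓ
      have : (∑ i, y k ℓ i * (starRingEnd ℂ) (y k ℓ i)) = ((∑ i, ‖y k ℓ i‖ ^ 2 : ℝ) : ℂ) := by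
        rw [Complex.ofReal_sum]
        refine Finset.sum_congr rfl fun i _ => ?_
        rw [Complex.mul_conj, Complex.normSq_eq_norm_sq,
          Complex.ofReal_pow]
      rw [this, hnorm k ℓ]
      norm_num
    simp [this]
  -- off-diagonal bound
  have hGb : ∀ k h : Fin r, k ≠ h → ‖G k h‖ ≤ μ' := by
    intro k h hkh
    rw [hGdef]
    calc ‖∏ ℓ, ∑ i, y k ℓ i * (starRingEnd ℂ) (y h ℓ i)‖
        = ∏ ℓ, ‖∑ i, y k ℓ i * (starRingEnd ℂ) (y h ℓ i)‖ := norm_prod _ _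
      _ ≤ μ' := hμ k h hkh
  -- lower bound the expansion
  have hlow : (1 - ((r : ℝ) - 1) * μ') * (∑ k, ‖α k‖ ^ 2) ≤ tnsq (cpTensor α y) := by
    rw [key]
    have hsplit : ∀ k : Fin r, (∑ h, (α k * (starRingEnd ℂ) (α h) * G k h).re) =
        ‖α k‖ ^ 2 + ∑ h ∈ Finset.univ.erase k, (α k * (starRingEnd ℂ) (α h) * G k h).re := by
      intro k
      rw [← Finset.add_sum_erase _ _ (Finset.mem_univ k)]
      congr 1
      rw [hdiag k, mul_one, Complex.mul_conj, Complex.ofReal_re, Complex.normSq_eq_norm_sq]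
    simp only [hsplit]
    rw [Finset.sum_add_distrib]
    have hterm : ∀ k : Fin r, ∀ h ∈ Finset.univ.erase k,
        -(μ' / 2 * (‖α k‖ ^ 2 + ‖α h‖ ^ 2)) ≤ (α k * (starRingEnd ℂ) (α h) * G k h).re := by
      intro k h hh
      have hkh : k ≠ h := (Finset.ne_of_mem_erase hh).symm
      have h1 : ‖α k * (starRingEnd ℂ) (α h) * G k h‖ ≤ μ' / 2 * (‖α k‖ ^ 2 + ‖α h‖ ^ 2) := by
        rw [norm_mul, norm_mul, RingHomIsometric.norm_map]
        have h2 : ‖α k‖ * ‖α h‖ * ‖G k h‖ ≤ ‖α k‖ * ‖α h‖ * μ' :=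
          mul_le_mul_of_nonneg_left (hGb k h hkh)
            (mul_nonneg (norm_nonneg _) (norm_nonneg _))
        have h3 : ‖α k‖ * ‖α h‖ ≤ (‖α k‖ ^ 2 + ‖α h‖ ^ 2) / 2 := by
          nlinarith [sq_nonneg (‖α k‖ - ‖α h‖)]
        nlinarith [norm_nonneg (α k), norm_nonneg (α h)]
      have h4 : -(‖α k * (starRingEnd ℂ) (α h) * G k h‖) ≤
          (α k * (starRingEnd ℂ) (α h) * G k h).re := by
        have h5 := Complex.abs_re_le_norm (α k * (starRingEnd ℂ) (α h) * G k h)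
        exact (abs_le.mp h5).1
      linarith [h4, neg_le_neg h1]
    have hsum2 : ∀ k : Fin r,
        -(μ' / 2 * ∑ h ∈ Finset.univ.erase k, (‖α k‖ ^ 2 + ‖α h‖ ^ 2)) ≤
        ∑ h ∈ Finset.univ.erase k, (α k * (starRingEnd ℂ) (α h) * G k h).re := by
      intro k
      calc -(μ' / 2 * ∑ h ∈ Finset.univ.erase k, (‖α k‖ ^ 2 + ‖α h‖ ^ 2))
          = ∑ h ∈ Finset.univ.erase k, -(μ' / 2 * (‖α k‖ ^ 2 + ‖α h‖ ^ 2)) := by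
            rw [Finset.mul_sum, ← Finset.sum_neg_distrib]
        _ ≤ _ := Finset.sum_le_sum (hterm k)
    -- total count identity
    have hcount : ∑ k, ∑ h ∈ Finset.univ.erase k, (‖α k‖ ^ 2 + ‖α h‖ ^ 2) =
        2 * ((r : ℝ) - 1) * ∑ k, ‖α k‖ ^ 2 := by
      rcases Nat.eq_zero_or_pos r with hr | hr
      · subst hr; simp
      have h5 : ∀ k : Fin r, (Finset.univ.erase k).card = r - 1 := by
        intro k
        rw [Finset.card_erase_of_mem (Finset.mem_univ k), Finset.card_univ, Fintype.card_fin]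
      simp only [Finset.sum_add_distrib]
      have hA : ∑ k : Fin r, ∑ _h ∈ Finset.univ.erase k, ‖α k‖ ^ 2 =
          ((r : ℝ) - 1) * ∑ k, ‖α k‖ ^ 2 := by
        rw [Finset.mul_sum]
        refine Finset.sum_congr rfl fun k _ => ?_
        rw [Finset.sum_const, h5 k, nsmul_eq_mul]
        rw [Nat.cast_sub hr, Nat.cast_one]
      have hB : ∑ k : Fin r, ∑ h ∈ Finset.univ.erase k, ‖α h‖ ^ 2 =
          ((r : ℝ) - 1) * ∑ k, ‖α k‖ ^ 2 := by
        have hswap := Finset.sum_comm' (s := (Finset.univ : Finset (Fin r)))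
          (t := fun k => Finset.univ.erase k) (t' := (Finset.univ : Finset (Fin r)))
          (s' := fun h => Finset.univ.erase h) (f := fun _ h => ‖α h‖ ^ 2) (by
            intro x y
            simp only [Finset.mem_univ, Finset.mem_erase, true_and, and_true]
            exact ne_comm)
        rw [hswap]
        exact hA
      rw [hA, hB]; ring
    have hS0 : 0 ≤ ∑ k, ‖α k‖ ^ 2 :=
      Finset.sum_nonneg fun k _ => sq_nonneg _
    have hfinal : -(μ' / 2 * (2 * ((r : ℝ) - 1) * ∑ k, ‖α k‖ ^ 2)) ≤
        ∑ k, ∑ h ∈ Finset.univ.erase k, (α k * (starRingEnd ℂ) (α h) * G k h).re := by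
      have e1 : ∑ k : Fin r, -(μ' / 2 * ∑ h ∈ Finset.univ.erase k, (‖α k‖ ^ 2 + ‖α h‖ ^ 2))
          = -(μ' / 2 * (2 * ((r : ℝ) - 1) * ∑ k, ‖α k‖ ^ 2)) := by
        rw [Finset.sum_neg_distrib, ← Finset.mul_sum, hcount]
      calc -(μ' / 2 * (2 * ((r : ℝ) - 1) * ∑ k, ‖α k‖ ^ 2))
          = ∑ k : Fin r, -(μ' / 2 * ∑ h ∈ Finset.univ.erase k, (‖α k‖ ^ 2 + ‖α h‖ ^ 2)) :=
            e1.symm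
        _ ≤ _ := Finset.sum_le_sum fun k _ => hsum2 k
    nlinarith [hfinal]
  -- conclude
  rw [one_div, inv_mul_eq_div, le_div_iff₀ hcpos]
  nlinarith [hlow]
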